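/- arXiv:1509.04160 — 3 statements merged into one kernel-verified Lean document; each statement's English description precedes it below -/
import Mathlib

section
/- Let ((W_i, c_i))_{i∈I} be a fusion frame for H with bounds α ≤ β, and let A ∈ B(H) be boundedly invertible. Then ((AW_i, c_i))_{i∈I} is a fusion frame for H with bounds α γ^{-2} and β γ², where γ = ‖A‖‖A^{-1}‖. -/
noncomputable def proj {H : Type*} [NormedAddCommGroup H] [InnerProductSpace ℂ H]
    (W : Submodule ℂ H) [CompleteSpace W] : H →L[ℂ] H :=
  W.subtypeL.comp (W.orthogonalProjectionOnto)

theorem proj_norm_le {H : Type*} [NormedAddCommGroup H] [InnerProductSpace ℂ H]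
    (W : Submodule ℂ H) [CompleteSpace W] (x : H) : ‖proj W x‖ ≤ ‖x‖ := by
  have := Submodule.orthogonalProjectionOnto_norm_le W
  calc ‖proj W x‖ = ‖W.orthogonalProjectionOnto x‖ := rfl
    _ ≤ ‖W.orthogonalProjectionOnto‖ * ‖x‖ := (W.orthogonalProjectionOnto).le_opNorm x
    _ ≤ 1 * ‖x‖ := by gcongr
    _ = ‖x‖ := one_mul _

theorem key {H : Type*} [NormedAddCommGroup H] [InnerProductSpace ℂ H] [CompleteSpace H]
    (W : Submodule ℂ H) [CompleteSpace W] (T : H →L[ℂ] H) [CompleteSpace (W.map (T : H →ₗ[ℂ] H))] (x : H) :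
    ‖proj W (ContinuousLinearMap.adjoint T x)‖ ≤ ‖T‖ * ‖proj (W.map (T : H →ₗ[ℂ] H)) x‖ := by
  set T' := ContinuousLinearMap.adjoint T with hT'
  set P := proj (W.map (T : H →ₗ[ℂ] H)) x with hP
  have hmem : T' (x - P) ∈ Wᗮ := by
    rw [Submodule.mem_orthogonal]
    intro w hw
    rw [ContinuousLinearMap.adjoint_inner_right]
    rw [inner_eq_zero_symm]
    exact (Submodule.mem_orthogonal' _ _).mp
      (Submodule.sub_starProjection_mem_orthogonal (K := W.map (T : H →ₗ[ℂ] H)) x) (T w)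
      (Submodule.mem_map_of_mem hw)
  have heq : proj W (T' x) = proj W (T' P) := by
    have h0 : W.orthogonalProjectionOnto (T' (x - P)) = 0 :=
      Submodule.orthogonalProjectionOnto_apply_of_mem_orthogonal hmem
    have : W.orthogonalProjectionOnto (T' x) = W.orthogonalProjectionOnto (T' P) := by
      have := map_sub (W.orthogonalProjectionOnto) (T' x) (T' P)
      rw [← map_sub T'] at this
      rw [h0] at this
      exact sub_eq_zero.mp this.symm
    simp only [proj, ContinuousLinearMap.comp_apply, this]
  calc ‖proj W (T' x)‖ = ‖proj W (T' P)‖ := by rw [heq]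
    _ ≤ ‖T' P‖ := proj_norm_le _ _
    _ ≤ ‖T'‖ * ‖P‖ := T'.le_opNorm P
    _ = ‖T‖ * ‖proj (W.map (T : H →ₗ[ℂ] H)) x‖ := by
        rw [hT', LinearIsometryEquiv.norm_map ContinuousLinearMap.adjoint T]

theorem proj_congr {H : Type*} [NormedAddCommGroup H] [InnerProductSpace ℂ H]
    {V₁ V₂ : Submodule ℂ H} [CompleteSpace V₁] [CompleteSpace V₂] (h : V₁ = V₂) :
    proj V₁ = proj V₂ := by subst h; rfl

/-- If `((Wᵢ, cᵢ))` is a fusion frame for `H` with bounds `α ≤ β` and `A ∈ B(H)` is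
boundedly invertible, then `((AWᵢ, cᵢ))` is a fusion frame for `H` with bounds
`α γ⁻²` and `β γ²`, where `γ = ‖A‖ ‖A⁻¹‖`. -/
theorem fusionFrame_map {H : Type*} [NormedAddCommGroup H] [InnerProductSpace ℂ H]
    [CompleteSpace H] {I : Type*} [Countable I]
    (W : I → Submodule ℂ H) [∀ i, CompleteSpace (W i)]
    (c : I → ℝ) (hc : ∀ i, 0 ≤ c i) (α β : ℝ) (hα : 0 < α) (hβ : 0 < β) (hαβ : α ≤ β)
    (hsum : ∀ x : H, Summable fun i => (c i) ^ 2 * ‖proj (W i) x‖ ^ 2)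
    (hframe : ∀ x : H,
      α * ‖x‖ ^ 2 ≤ ∑' i, (c i) ^ 2 * ‖proj (W i) x‖ ^ 2 ∧
      ∑' i, (c i) ^ 2 * ‖proj (W i) x‖ ^ 2 ≤ β * ‖x‖ ^ 2)
    (A : H ≃L[ℂ] H) [∀ i, CompleteSpace ((W i).map ((A : H →L[ℂ] H) : H →ₗ[ℂ] H))] :
    (∀ x : H, Summable fun i => (c i) ^ 2 * ‖proj ((W i).map ((A : H →L[ℂ] H) : H →ₗ[ℂ] H)) x‖ ^ 2) ∧
    ∀ x : H,
      α * (‖(A : H →L[ℂ] H)‖ * ‖(A.symm : H →L[ℂ] H)‖) ^ (-2 : ℤ) * ‖x‖ ^ 2 ≤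
          ∑' i, (c i) ^ 2 * ‖proj ((W i).map ((A : H →L[ℂ] H) : H →ₗ[ℂ] H)) x‖ ^ 2 ∧
      ∑' i, (c i) ^ 2 * ‖proj ((W i).map ((A : H →L[ℂ] H) : H →ₗ[ℂ] H)) x‖ ^ 2 ≤
          β * (‖(A : H →L[ℂ] H)‖ * ‖(A.symm : H →L[ℂ] H)‖) ^ 2 * ‖x‖ ^ 2 := by
  set A' : H →L[ℂ] H := (A : H →L[ℂ] H) with hA'
  set B : H →L[ℂ] H := (A.symm : H →L[ℂ] H) with hB'
  rcases subsingleton_or_nontrivial H with hS | hNT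
  · constructor
    · intro x
      have hx : x = (0 : H) := Subsingleton.elim x 0
      subst hx
      simp only [map_zero, norm_zero]
      simpa using summable_zero
    · intro x
      have hx : x = (0 : H) := Subsingleton.elim x 0
      subst hx
      simp only [map_zero, norm_zero]
      constructor <;> simp
  -- nontrivial case
  have hAinj : Function.Injective A' := A.injective
  have hApos : (0 : ℝ) < ‖A'‖ := by
    apply norm_pos_iff.mpr
    intro h
    obtain ⟨x0, hx0⟩ := exists_ne (0 : H)
    apply hx0
    apply hAinj
    rw [h]; simp
  have hBpos : (0 : ℝ) < ‖B‖ := by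
    apply norm_pos_iff.mpr
    intro h
    obtain ⟨x0, hx0⟩ := exists_ne (0 : H)
    apply hx0
    apply (A.symm.injective : Function.Injective B)
    show B x0 = B 0
    rw [h]; simp
  have hadjA : ‖ContinuousLinearMap.adjoint A'‖ = ‖A'‖ :=
    LinearIsometryEquiv.norm_map ContinuousLinearMap.adjoint A'
  have hadjB : ‖ContinuousLinearMap.adjoint B‖ = ‖B‖ :=
    LinearIsometryEquiv.norm_map ContinuousLinearMap.adjoint B
  have hcomp : ∀ x : H, ContinuousLinearMap.adjoint B (ContinuousLinearMap.adjoint A' x) = x := by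
    intro x
    rw [← ContinuousLinearMap.comp_apply, ← ContinuousLinearMap.adjoint_comp]
    have : A' ∘L B = ContinuousLinearMap.id ℂ H := by ext y; simp [hA', hB']
    rw [this, ContinuousLinearMap.adjoint_id, ContinuousLinearMap.id_apply]
  have hWW : ∀ i, ((W i).map (A' : H →ₗ[ℂ] H)).map (B : H →ₗ[ℂ] H) = W i := by
    intro i
    ext y
    constructor
    · rintro ⟨a, ⟨b, hb, rfl⟩, rfl⟩
      simpa [hA', hB'] using hb
    · intro hy
      exact ⟨A' y, ⟨y, hy, rfl⟩, by simp [hA', hB']⟩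
  -- the two key pointwise inequalities
  have h1 : ∀ i (x : H), ‖proj (W i) (ContinuousLinearMap.adjoint A' x)‖ ≤
      ‖A'‖ * ‖proj ((W i).map (A' : H →ₗ[ℂ] H)) x‖ := fun i x => key (W i) A' x
  have h2 : ∀ i (x : H), ‖proj ((W i).map (A' : H →ₗ[ℂ] H)) x‖ ≤
      ‖B‖ * ‖proj (W i) (ContinuousLinearMap.adjoint A' x)‖ := by
    intro i x
    haveI : CompleteSpace (((W i).map (A' : H →ₗ[ℂ] H)).map (B : H →ₗ[ℂ] H)) := by rw [hWW i]; infer_instance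
    have := key ((W i).map (A' : H →ₗ[ℂ] H)) B (ContinuousLinearMap.adjoint A' x)
    rw [hcomp x] at this
    calc ‖proj ((W i).map (A' : H →ₗ[ℂ] H)) x‖
        ≤ ‖B‖ * ‖proj (((W i).map (A' : H →ₗ[ℂ] H)).map (B : H →ₗ[ℂ] H)) (ContinuousLinearMap.adjoint A' x)‖ := this
      _ = ‖B‖ * ‖proj (W i) (ContinuousLinearMap.adjoint A' x)‖ := by
          rw [proj_congr (hWW i)]
  -- pointwise squared comparisons
  have hsq2 : ∀ i (x : H), c i ^ 2 * ‖proj ((W i).map (A' : H →ₗ[ℂ] H)) x‖ ^ 2 ≤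
      ‖B‖ ^ 2 * (c i ^ 2 * ‖proj (W i) (ContinuousLinearMap.adjoint A' x)‖ ^ 2) := by
    intro i x
    have := pow_le_pow_left₀ (norm_nonneg _) (h2 i x) 2
    nlinarith [sq_nonneg (c i), norm_nonneg (proj ((W i).map (A' : H →ₗ[ℂ] H)) x)]
  have hsq1 : ∀ i (x : H), c i ^ 2 * ‖proj (W i) (ContinuousLinearMap.adjoint A' x)‖ ^ 2 ≤
      ‖A'‖ ^ 2 * (c i ^ 2 * ‖proj ((W i).map (A' : H →ₗ[ℂ] H)) x‖ ^ 2) := by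
    intro i x
    have := pow_le_pow_left₀ (norm_nonneg _) (h1 i x) 2
    nlinarith [sq_nonneg (c i), norm_nonneg (proj (W i) (ContinuousLinearMap.adjoint A' x))]
  have hsum' : ∀ x : H, Summable fun i => c i ^ 2 * ‖proj ((W i).map (A' : H →ₗ[ℂ] H)) x‖ ^ 2 := by
    intro x
    apply Summable.of_nonneg_of_le (fun i => by positivity) (fun i => hsq2 i x)
    exact (hsum (ContinuousLinearMap.adjoint A' x)).mul_left _
  refine ⟨hsum', fun x => ?_⟩
  set y := ContinuousLinearMap.adjoint A' x with hy
  set S := ∑' i, c i ^ 2 * ‖proj ((W i).map (A' : H →ₗ[ℂ] H)) x‖ ^ 2 with hS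
  have hSnn : 0 ≤ S := tsum_nonneg fun i => by positivity
  have hyx : ‖y‖ ≤ ‖A'‖ * ‖x‖ := by
    calc ‖y‖ ≤ ‖ContinuousLinearMap.adjoint A'‖ * ‖x‖ := (ContinuousLinearMap.adjoint A').le_opNorm x
      _ = ‖A'‖ * ‖x‖ := by rw [hadjA]
  have hxy : ‖x‖ ≤ ‖B‖ * ‖y‖ := by
    calc ‖x‖ = ‖ContinuousLinearMap.adjoint B y‖ := by rw [hcomp x]
      _ ≤ ‖ContinuousLinearMap.adjoint B‖ * ‖y‖ := (ContinuousLinearMap.adjoint B).le_opNorm y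
      _ = ‖B‖ * ‖y‖ := by rw [hadjB]
  constructor
  · -- lower bound
    have hmid : α * ‖y‖ ^ 2 ≤ ‖A'‖ ^ 2 * S := by
      calc α * ‖y‖ ^ 2 ≤ ∑' i, c i ^ 2 * ‖proj (W i) y‖ ^ 2 := (hframe y).1
        _ ≤ ∑' i, ‖A'‖ ^ 2 * (c i ^ 2 * ‖proj ((W i).map (A' : H →ₗ[ℂ] H)) x‖ ^ 2) :=
            Summable.tsum_le_tsum (fun i => hsq1 i x) (hsum y) ((hsum' x).mul_left _)
        _ = ‖A'‖ ^ 2 * S := tsum_mul_left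
    have hxx : α * ‖x‖ ^ 2 ≤ (‖A'‖ * ‖B‖) ^ 2 * S := by
      have h3 : ‖x‖ ^ 2 ≤ ‖B‖ ^ 2 * ‖y‖ ^ 2 := by nlinarith [norm_nonneg x, norm_nonneg y, hBpos]
      nlinarith [hα.le, sq_nonneg ‖B‖]
    have hγ : (0 : ℝ) < ‖A'‖ * ‖B‖ := mul_pos hApos hBpos
    rw [show ((‖A'‖ * ‖B‖ : ℝ) ^ (-2 : ℤ)) = ((‖A'‖ * ‖B‖) ^ 2)⁻¹ by
      rw [zpow_neg]; norm_cast]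
    rw [mul_comm α _, mul_assoc, ← div_eq_inv_mul, div_le_iff₀ (by positivity)]
    linarith [hxx]
  · -- upper bound
    calc S ≤ ∑' i, ‖B‖ ^ 2 * (c i ^ 2 * ‖proj (W i) y‖ ^ 2) :=
          Summable.tsum_le_tsum (fun i => hsq2 i x) (hsum' x) ((hsum y).mul_left _)
      _ = ‖B‖ ^ 2 * ∑' i, c i ^ 2 * ‖proj (W i) y‖ ^ 2 := tsum_mul_left
      _ ≤ ‖B‖ ^ 2 * (β * ‖y‖ ^ 2) :=
          mul_le_mul_of_nonneg_left (hframe y).2 (by positivity)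
      _ ≤ ‖B‖ ^ 2 * (β * (‖A'‖ * ‖x‖) ^ 2) := by
          have h4 : ‖y‖ ^ 2 ≤ (‖A'‖ * ‖x‖) ^ 2 := pow_le_pow_left₀ (norm_nonneg _) hyx 2
          exact mul_le_mul_of_nonneg_left
            (mul_le_mul_of_nonneg_left h4 hβ.le) (by positivity)
      _ = β * (‖A'‖ * ‖B‖) ^ 2 * ‖x‖ ^ 2 := by ring
end

section
/- Let A be a B(H,K)-valued frame sequence with frame bounds α ≤ β, and B a Bessel sequence with ‖T_A - T_B‖ ≤ μ, where μ < √α and Δ(H_A, H_B) := max{δ(H_A,H_B), δ(H_B,H_A)} < 1. Then B is an operator-valued frame sequence with frame bounds (√α - μ)² and (δ(H_B, H_A^⊥)√β + μ)². If A is a frame for H then so is B. -/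
open ContinuousLinearMap

/-- The gap `δ(V,W) = ‖P_{Wᗮ}|V‖` from `V` to `W`. -/
noncomputable def gap {H : Type*} [NormedAddCommGroup H] [InnerProductSpace ℂ H]
    [CompleteSpace H] (V W : Submodule ℂ H) : ℝ :=
  ‖(proj Wᗮ).comp V.subtypeL‖

open scoped InnerProductSpace

lemma gap_nonneg {H : Type*} [NormedAddCommGroup H] [InnerProductSpace ℂ H]
    [CompleteSpace H] (V W : Submodule ℂ H) : 0 ≤ gap V W := by
  exact norm_nonneg ((_root_.proj Wᗮ).comp V.subtypeL)

lemma gap_bound {H : Type*} [NormedAddCommGroup H] [InnerProductSpace ℂ H]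
    [CompleteSpace H] (V W : Submodule ℂ H) [CompleteSpace W] {v : H} (hv : v ∈ V) :
    ‖((Wᗮ.orthogonalProjectionOnto) v : H)‖ ≤ gap V W * ‖v‖ :=
  ((_root_.proj Wᗮ).comp V.subtypeL).le_opNorm ⟨v, hv⟩

lemma vanish_on_orthogonal {H K : Type*}
    [NormedAddCommGroup H] [InnerProductSpace ℂ H] [CompleteSpace H]
    [NormedAddCommGroup K] [InnerProductSpace ℂ K] [CompleteSpace K]
    (T : H →L[ℂ] K) (W : Submodule ℂ H)
    (hW : W = (LinearMap.range (adjoint T).toLinearMap).topologicalClosure)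
    {w : H} (hw : w ∈ Wᗮ) : T w = 0 := by
  have hmem : adjoint T (T w) ∈ W := by
    rw [hW]; exact Submodule.le_topologicalClosure _ ⟨T w, rfl⟩
  have h0 := hw _ hmem
  rw [ContinuousLinearMap.adjoint_inner_left] at h0
  exact inner_self_eq_zero.mp h0

set_option maxHeartbeats 1000000 in
lemma proj_surj {H : Type*} [NormedAddCommGroup H] [InnerProductSpace ℂ H]
    [CompleteSpace H] (HA HB : Submodule ℂ H) [CompleteSpace HA] [CompleteSpace HB]
    (h1 : gap HA HB < 1) (h2 : gap HB HA < 1) :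
    ∀ x ∈ HB, ∃ y ∈ HA, ((HB.orthogonalProjectionOnto) y : H) = x := by
  set Tp : HA →L[ℂ] HB := (HB.orthogonalProjectionOnto).comp HA.subtypeL with hTp
  set d : ℝ := gap HA HB with hd
  have hd0 : 0 ≤ d := gap_nonneg _ _
  have hd2 : 0 < 1 - d ^ 2 := by nlinarith
  have hbb : ∀ a : HA, Real.sqrt (1 - d ^ 2) * ‖a‖ ≤ ‖Tp a‖ := by
    intro a
    have hsq : ‖(a : H)‖ ^ 2 = ‖(((HB.orthogonalProjectionOnto) (a : H) : HB) : H)‖ ^ 2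
        + ‖(((HBᗮ.orthogonalProjectionOnto) (a : H) : HBᗮ) : H)‖ ^ 2 :=
      Submodule.norm_sq_eq_add_norm_sq_projection (a : H) HB
    have hproj : ‖((HBᗮ.orthogonalProjectionOnto) (a : H) : H)‖ ≤ d * ‖(a : H)‖ :=
      gap_bound HA HB a.2
    have hTpa : ‖Tp a‖ = ‖((HB.orthogonalProjectionOnto) (a : H) : H)‖ := rfl
    have hna : ‖a‖ = ‖(a : H)‖ := rfl
    have h3 : (1 - d ^ 2) * ‖(a : H)‖ ^ 2 ≤ ‖Tp a‖ ^ 2 := by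
      rw [hTpa]; nlinarith [norm_nonneg ((HBᗮ.orthogonalProjectionOnto) (a : H) : H),
        norm_nonneg (a : H)]
    calc Real.sqrt (1 - d ^ 2) * ‖a‖ = Real.sqrt ((1 - d ^ 2) * ‖(a : H)‖ ^ 2) := by
          rw [Real.sqrt_mul hd2.le, Real.sqrt_sq (norm_nonneg _), hna]
      _ ≤ Real.sqrt (‖Tp a‖ ^ 2) := Real.sqrt_le_sqrt h3
      _ = ‖Tp a‖ := Real.sqrt_sq (norm_nonneg _)
  have hc : 0 < Real.sqrt (1 - d ^ 2) := Real.sqrt_pos.mpr hd2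
  have hanti : AntilipschitzWith ((Real.sqrt (1 - d ^ 2))⁻¹).toNNReal Tp := by
    apply Tp.antilipschitz_of_bound
    intro a
    rw [Real.coe_toNNReal _ (by positivity)]
    rw [inv_mul_eq_div, le_div_iff₀ hc]
    linarith [hbb a]
  have hclosed := ContinuousLinearMap.closed_range_of_antilipschitz hanti
  have horth : (LinearMap.range Tp.toLinearMap)ᗮ = ⊥ := by
    rw [Submodule.eq_bot_iff]
    intro b hb
    have hb' := (Submodule.mem_orthogonal _ _).mp hb
    have hbHA : (b : H) ∈ HAᗮ := by
      rw [Submodule.mem_orthogonal]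
      intro u hu
      have h1' : ⟪Tp ⟨u, hu⟩, b⟫_ℂ = 0 := hb' _ ⟨⟨u, hu⟩, rfl⟩
      rw [Submodule.coe_inner] at h1'
      have h1'' : ⟪(((HB.orthogonalProjectionOnto) u : HB) : H), (b : H)⟫_ℂ = 0 := h1'
      have h2' : ⟪u - (((HB.orthogonalProjectionOnto) u : HB) : H), (b : H)⟫_ℂ = 0 := by
        rw [inner_eq_zero_symm]
        exact (Submodule.mem_orthogonal _ _).mp
          (Submodule.sub_starProjection_mem_orthogonal (K := HB) u) _ b.2
      have h3' : u = (u - (((HB.orthogonalProjectionOnto) u : HB) : H))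
          + (((HB.orthogonalProjectionOnto) u : HB) : H) := by abel
      rw [h3', inner_add_left, h1'', h2', add_zero]
    have hfix : ((HAᗮ.orthogonalProjectionOnto) (b : H) : H) = (b : H) :=
      Submodule.starProjection_eq_self_iff.mpr hbHA
    have hub : ‖(b : H)‖ ≤ gap HB HA * ‖(b : H)‖ := by
      have := gap_bound HB HA b.2
      rwa [hfix] at this
    have : ‖(b : H)‖ = 0 := by nlinarith [norm_nonneg (b : H)]
    exact Subtype.ext (norm_eq_zero.mp this)
  have htop : LinearMap.range Tp.toLinearMap = ⊤ := by
    rw [← hclosed, Submodule.topologicalClosure_eq_top_iff, horth]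
  intro x hx
  obtain ⟨a, ha⟩ := LinearMap.range_eq_top.mp htop ⟨x, hx⟩
  refine ⟨(a : H), a.2, ?_⟩
  have : ((Tp a : HB) : H) = x := by rw [← ContinuousLinearMap.coe_coe, ha]
  exact this

/-- Let `A` be an operator-valued frame sequence with frame bounds `α ≤ β` and `B` a
Bessel sequence with `‖T_A - T_B‖ ≤ μ < √α` and `Δ(H_A, H_B) < 1`. Then `B` is an
operator-valued frame sequence with frame bounds `(√α - μ)²` and
`(δ(H_B, H_Aᗮ)√β + μ)²`; and if `A` is a frame for `H` then so is `B`. -/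
theorem perturbed_is_frame_sequence {H K : Type*}
    [NormedAddCommGroup H] [InnerProductSpace ℂ H] [CompleteSpace H]
    [NormedAddCommGroup K] [InnerProductSpace ℂ K] [CompleteSpace K]
    {I : Type*} [Countable I] (TA TB : H →L[ℂ] lp (fun _ : I => K) 2)
    (HA HB : Submodule ℂ H)
    (hHA : HA = (LinearMap.range (adjoint TA).toLinearMap).topologicalClosure)
    (hHB : HB = (LinearMap.range (adjoint TB).toLinearMap).topologicalClosure)
    (α β : ℝ) (hα : 0 < α) (hαβ : α ≤ β)
    (hframe : ∀ x ∈ HA, α * ‖x‖ ^ 2 ≤ ‖TA x‖ ^ 2 ∧ ‖TA x‖ ^ 2 ≤ β * ‖x‖ ^ 2)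
    (μ : ℝ) (hμ : ‖TA - TB‖ ≤ μ) (hμα : μ < Real.sqrt α)
    (hΔ : max (gap HA HB) (gap HB HA) < 1) :
    (∀ x ∈ HB,
      (Real.sqrt α - μ) ^ 2 * ‖x‖ ^ 2 ≤ ‖TB x‖ ^ 2 ∧
      ‖TB x‖ ^ 2 ≤ (gap HB HAᗮ * Real.sqrt β + μ) ^ 2 * ‖x‖ ^ 2) ∧
    (HA = ⊤ → HB = ⊤) := by
  haveI cHA : CompleteSpace HA := by
    rw [hHA]; exact (Submodule.isClosed_topologicalClosure _).completeSpace_coe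
  haveI cHB : CompleteSpace HB := by
    rw [hHB]; exact (Submodule.isClosed_topologicalClosure _).completeSpace_coe
  have hμ0 : 0 ≤ μ := le_trans (ContinuousLinearMap.opNorm_nonneg _) hμ
  have hδ1 : gap HA HB < 1 := lt_of_le_of_lt (le_max_left _ _) hΔ
  have hδ2 : gap HB HA < 1 := lt_of_le_of_lt (le_max_right _ _) hΔ
  have hkerA : ∀ w ∈ HAᗮ, TA w = 0 := fun w hw => vanish_on_orthogonal TA HA hHA hw
  have hkerB : ∀ w ∈ HBᗮ, TB w = 0 := fun w hw => vanish_on_orthogonal TB HB hHB hw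
  have hdiff : ∀ z : H, ‖TA z - TB z‖ ≤ μ * ‖z‖ := by
    intro z
    calc ‖TA z - TB z‖ = ‖(TA - TB) z‖ := by simp
      _ ≤ ‖TA - TB‖ * ‖z‖ := (TA - TB).le_opNorm z
      _ ≤ μ * ‖z‖ := mul_le_mul_of_nonneg_right hμ (norm_nonneg z)
  constructor
  · intro x hx
    constructor
    · -- lower bound
      obtain ⟨y, hyA, hy⟩ := proj_surj HA HB hδ1 hδ2 x hx
      have hw : y - x ∈ HBᗮ := by
        have := Submodule.sub_starProjection_mem_orthogonal (K := HB) y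
        rwa [Submodule.starProjection_apply, hy] at this
      have hTBxy : TB y = TB x := by
        have h0 : TB (y - x) = 0 := hkerB _ hw
        rw [map_sub, sub_eq_zero] at h0
        exact h0
      have hxy : ‖x‖ ≤ ‖y‖ := by
        rw [← hy]
        calc ‖(((HB.orthogonalProjectionOnto) y : HB) : H)‖
            = ‖((HB.orthogonalProjectionOnto) y : HB)‖ := rfl
          _ ≤ ‖HB.orthogonalProjectionOnto‖ * ‖y‖ := (HB.orthogonalProjectionOnto).le_opNorm y
          _ ≤ 1 * ‖y‖ := mul_le_mul_of_nonneg_right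
              (Submodule.orthogonalProjectionOnto_norm_le HB) (norm_nonneg y)
          _ = ‖y‖ := one_mul _
      have hTAy : Real.sqrt α * ‖y‖ ≤ ‖TA y‖ := by
        have h1 := (hframe y hyA).1
        calc Real.sqrt α * ‖y‖ = Real.sqrt (α * ‖y‖ ^ 2) := by
              rw [Real.sqrt_mul hα.le, Real.sqrt_sq (norm_nonneg _)]
          _ ≤ Real.sqrt (‖TA y‖ ^ 2) := Real.sqrt_le_sqrt h1
          _ = ‖TA y‖ := Real.sqrt_sq (norm_nonneg _)
      have h5 : 0 ≤ Real.sqrt α - μ := by linarith [hμα.le]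
      have hTB : (Real.sqrt α - μ) * ‖x‖ ≤ ‖TB x‖ := by
        have h4 : ‖TA y‖ - ‖TB y‖ ≤ μ * ‖y‖ :=
          le_trans (norm_sub_norm_le _ _) (hdiff y)
        rw [← hTBxy]
        nlinarith [norm_nonneg x, norm_nonneg y]
      calc (Real.sqrt α - μ) ^ 2 * ‖x‖ ^ 2 = ((Real.sqrt α - μ) * ‖x‖) ^ 2 := by ring
        _ ≤ ‖TB x‖ ^ 2 := pow_le_pow_left₀ (mul_nonneg h5 (norm_nonneg x)) hTB 2
    · -- upper bound
      set u : H := ((HAᗮᗮ.orthogonalProjectionOnto) x : H) with hu_def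
      have huA : u ∈ HA := by
        have h1 : u ∈ HAᗮᗮ := ((HAᗮᗮ.orthogonalProjectionOnto) x).2
        rwa [Submodule.orthogonal_orthogonal] at h1
      have hxu : x - u ∈ HAᗮ := by
        have h1 := Submodule.sub_starProjection_mem_orthogonal (K := HAᗮᗮ) x
        rwa [Submodule.starProjection_apply, Submodule.triorthogonal_eq_orthogonal] at h1
      have hTAxu : TA x = TA u := by
        have h0 : TA (x - u) = 0 := hkerA _ hxu
        rw [map_sub, sub_eq_zero] at h0
        exact h0
      have hub : ‖u‖ ≤ gap HB HAᗮ * ‖x‖ := gap_bound HB HAᗮ hx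
      have hTAu : ‖TA u‖ ≤ Real.sqrt β * ‖u‖ := by
        have h1 := (hframe u huA).2
        calc ‖TA u‖ = Real.sqrt (‖TA u‖ ^ 2) := (Real.sqrt_sq (norm_nonneg _)).symm
          _ ≤ Real.sqrt (β * ‖u‖ ^ 2) := Real.sqrt_le_sqrt h1
          _ = Real.sqrt β * ‖u‖ := by
              rw [Real.sqrt_mul (le_trans hα.le hαβ), Real.sqrt_sq (norm_nonneg _)]
      have hβ0 : 0 ≤ Real.sqrt β := Real.sqrt_nonneg _
      have hTB : ‖TB x‖ ≤ (gap HB HAᗮ * Real.sqrt β + μ) * ‖x‖ := by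
        have h4 : ‖TB x‖ - ‖TA x‖ ≤ μ * ‖x‖ := by
          have h4' := hdiff x
          have h4'' := norm_sub_norm_le (TB x) (TA x)
          rw [norm_sub_rev] at h4''
          linarith
        rw [hTAxu] at h4
        nlinarith [mul_le_mul_of_nonneg_left hub hβ0]
      calc ‖TB x‖ ^ 2 ≤ ((gap HB HAᗮ * Real.sqrt β + μ) * ‖x‖) ^ 2 :=
            pow_le_pow_left₀ (norm_nonneg _) hTB 2
        _ = (gap HB HAᗮ * Real.sqrt β + μ) ^ 2 * ‖x‖ ^ 2 := by ring
  · intro hAtop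
    rw [hAtop] at hδ1
    have hbot : HBᗮ = ⊥ := by
      rw [Submodule.eq_bot_iff]
      intro v hv
      have h1 : ‖((HBᗮ.orthogonalProjectionOnto) v : H)‖ ≤ gap ⊤ HB * ‖v‖ :=
        gap_bound ⊤ HB Submodule.mem_top
      rw [← Submodule.starProjection_apply, Submodule.starProjection_eq_self_iff.mpr hv] at h1
      have h2 : ‖v‖ = 0 := by nlinarith [norm_nonneg v]
      exact norm_eq_zero.mp h2
    exact Submodule.orthogonal_eq_bot_iff.mp hbot
end

section
/- Let A be a B(H,K)-valued frame for H with lower frame bound α, let B be a μ-perturbation of A with μ < √α, and let L ∈ B(H, ℓ²(I,K)) with L* T_A = 0. Then the dual of B with analysis operator T_B S_B^{-1} + P_{ker T_B*}(T_A S_A^{-1} + L) is a best approximation (in operator norm) of the dual T_A S_A^{-1} + L of A among all dual analysis operators of B, i.e., ‖(T_B S_B^{-1} + P_{ker T_B*}(T_A S_A^{-1} + L)) - (T_A S_A^{-1} + L)‖ ≤ ‖T - (T_A S_A^{-1} + L)‖ for every T of the form T_B S_B^{-1} + M with M ∈ B(H, ℓ²(I,K)), M* T_B = 0. -/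
set_option maxHeartbeats 1000000


open ContinuousLinearMap

lemma norm_sub_proj_le {E : Type*} [NormedAddCommGroup E] [InnerProductSpace ℂ E]
    [CompleteSpace E] (W : Submodule ℂ E) [CompleteSpace W] (u : E) :
    ‖u - _root_.proj W u‖ ≤ ‖u‖ := by
  have h : u - _root_.proj W u = (Submodule.orthogonalProjectionOnto Wᗮ u : E) := by
    rw [Submodule.orthogonalProjectionOnto_orthogonal]
    rfl
  rw [h]
  calc ‖(Submodule.orthogonalProjectionOnto Wᗮ u : E)‖ = ‖Submodule.orthogonalProjectionOnto Wᗮ u‖ := rfl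
    _ ≤ ‖Submodule.orthogonalProjectionOnto Wᗮ‖ * ‖u‖ := (Submodule.orthogonalProjectionOnto Wᗮ).le_opNorm u
    _ ≤ 1 * ‖u‖ :=
        mul_le_mul_of_nonneg_right (Submodule.orthogonalProjectionOnto_norm_le _) (norm_nonneg u)
    _ = ‖u‖ := one_mul ‖u‖

/-- Let `A` be an operator-valued frame for `H` with lower frame bound `α`, `B` a
`μ`-perturbation of `A` with `μ < √α`, and `L` with `L* T_A = 0`. Then the dual of `B`
with analysis operator `T_B S_B⁻¹ + P_{ker T_B*}(T_A S_A⁻¹ + L)` is a best approximation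
of the dual `T_A S_A⁻¹ + L` of `A` among all duals `T_B S_B⁻¹ + M` (`M* T_B = 0`) of `B`. -/
theorem best_approximation_dual {H K : Type*}
    [NormedAddCommGroup H] [InnerProductSpace ℂ H] [CompleteSpace H]
    [NormedAddCommGroup K] [InnerProductSpace ℂ K] [CompleteSpace K]
    {I : Type*} [Countable I] (TA TB : H →L[ℂ] lp (fun _ : I => K) 2)
    (α : ℝ) (hα : 0 < α)
    (hframe : ∀ x : H, α * ‖x‖ ^ 2 ≤ ‖TA x‖ ^ 2)
    (μ : ℝ) (hμ : ‖TA - TB‖ ≤ μ) (hμα : μ < Real.sqrt α)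
    (L : H →L[ℂ] lp (fun _ : I => K) 2) (hL : (adjoint L).comp TA = 0) :
    ∀ M : H →L[ℂ] lp (fun _ : I => K) 2, (adjoint M).comp TB = 0 →
      ‖(TB.comp (Ring.inverse ((adjoint TB).comp TB)) +
            (_root_.proj (LinearMap.ker (adjoint TB : lp (fun _ : I => K) 2 →ₗ[ℂ] H))).comp
              (TA.comp (Ring.inverse ((adjoint TA).comp TA)) + L)) -
          (TA.comp (Ring.inverse ((adjoint TA).comp TA)) + L)‖ ≤
      ‖(TB.comp (Ring.inverse ((adjoint TB).comp TB)) + M) -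
          (TA.comp (Ring.inverse ((adjoint TA).comp TA)) + L)‖ := by
  intro M hM
  set W : Submodule ℂ (lp (fun _ : I => K) 2) := LinearMap.ker (adjoint TB : lp (fun _ : I => K) 2 →ₗ[ℂ] H) with hW
  set D : H →L[ℂ] lp (fun _ : I => K) 2 :=
    TA.comp (Ring.inverse ((adjoint TA).comp TA)) + L with hD
  set R : H →L[ℂ] H := Ring.inverse ((adjoint TB).comp TB) with hR
  -- M maps into W
  have hM' : (adjoint TB).comp M = 0 := by
    have := congrArg adjoint hM
    rw [adjoint_comp, adjoint_adjoint] at this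
    simpa using this
  have hQM : ∀ x : H, _root_.proj W (M x) = M x := by
    intro x
    have hmem : M x ∈ W := by
      have : (adjoint TB) (M x) = 0 := by
        have := congrFun (congrArg DFunLike.coe hM') x
        simpa using this
      simpa [hW, LinearMap.mem_ker] using this
    show (W.subtypeL.comp (Submodule.orthogonalProjectionOnto W)) _ = _
    simp only [comp_apply, Submodule.subtypeL_apply]
    exact Submodule.starProjection_eq_self_iff.mpr hmem
  -- range TB ⊥ W
  have hQTB : ∀ y : H, _root_.proj W (TB y) = 0 := by
    intro y
    have hmem : TB y ∈ Wᗮ := by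
      intro w hw
      have hw0 : adjoint TB w = 0 := hw
      calc inner ℂ w (TB y) = inner ℂ (adjoint TB w) y := (adjoint_inner_left TB y w).symm
        _ = (0 : ℂ) := by rw [hw0]; simp
    show (W.subtypeL.comp (Submodule.orthogonalProjectionOnto W)) _ = _
    simp only [comp_apply, Submodule.subtypeL_apply]
    rw [Submodule.orthogonalProjectionOnto_apply_of_mem_orthogonal hmem]
    simp
  -- pointwise inequality
  refine ContinuousLinearMap.opNorm_le_bound _ (norm_nonneg (TB.comp R + M - D)) fun x => ?_
  set v : lp (fun _ : I => K) 2 := TB (R x) + M x - D x with hv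
  have hkey : (TB (R x) + _root_.proj W (D x)) - D x = v - _root_.proj W v := by
    have : _root_.proj W v = M x - _root_.proj W (D x) := by
      rw [hv]
      simp only [map_sub, map_add, hQTB, hQM]
      abel
    rw [this, hv]
    abel
  have hle : ‖(TB (R x) + _root_.proj W (D x)) - D x‖ ≤ ‖v‖ := by
    rw [hkey]
    exact norm_sub_proj_le W v
  calc ‖((TB.comp R + (_root_.proj W).comp D) - D) x‖
      = ‖(TB (R x) + _root_.proj W (D x)) - D x‖ := by
        simp [ContinuousLinearMap.sub_apply, ContinuousLinearMap.add_apply, comp_apply]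
    _ ≤ ‖v‖ := hle
    _ = ‖((TB.comp R + M) - D) x‖ := by
        rw [hv]
        simp [ContinuousLinearMap.sub_apply, ContinuousLinearMap.add_apply, comp_apply]
    _ ≤ ‖(TB.comp R + M) - D‖ * ‖x‖ := le_opNorm _ x
end
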